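/- For an odd prime p, integer r ≥ 1, and integers u, k with gcd(u,p)=1, the Euler quotient satisfies Q_r(u + k·p^r) ≡ Q_r(u) − k·p^{r−1}·u^{−1} (mod p^r), where u^{−1} is the inverse of u modulo p^r. -/

import Mathlib

/-- The Euler quotient of an integer `u` coprime to `p`, modulo `p^r`:
`(u^(φ(p^r)) - 1) / p^r` (an exact integer division when `gcd(u,p)=1`). -/
def eulerQuotientZ (p r : ℕ) (u : ℤ) : ℤ :=
  (u ^ (p ^ (r - 1) * (p - 1)) - 1) / (p : ℤ) ^ r

private lemma binom_aux (u c : ℤ) (n : ℕ) :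
    c ^ 2 ∣ (u + c) ^ (n + 1) - (u ^ (n + 1) + ((n : ℤ) + 1) * u ^ n * c) := by
  induction n with
  | zero => norm_num
  | succ n ih =>
    have h : (u + c) ^ (n + 1 + 1) - (u ^ (n + 1 + 1) + (((n + 1 : ℕ) : ℤ) + 1) * u ^ (n + 1) * c)
        = (u + c) * ((u + c) ^ (n + 1) - (u ^ (n + 1) + ((n : ℤ) + 1) * u ^ n * c))
          + ((n : ℤ) + 1) * u ^ n * c ^ 2 := by push_cast; ring
    rw [h]
    exact dvd_add (Dvd.dvd.mul_left ih _) (Dvd.dvd.mul_left (dvd_refl _) _)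

theorem euler_quotient_shift (p : ℕ) (hp : p.Prime) (hodd : Odd p)
    (r : ℕ) (hr : 1 ≤ r) (u k w : ℤ) (hu : Int.gcd u p = 1)
    (hw : u * w ≡ 1 [ZMOD ((p : ℤ) ^ r)]) :
    eulerQuotientZ p r (u + k * (p : ℤ) ^ r) ≡
      eulerQuotientZ p r u - k * (p : ℤ) ^ (r - 1) * w [ZMOD ((p : ℤ) ^ r)] := by
  set q : ℤ := (p : ℤ) ^ r with hqdef
  set N : ℕ := p ^ (r - 1) * (p - 1) with hNdef
  set M : ℕ := p ^ r with hMdef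
  have hMcast : (M : ℤ) = q := by push_cast [hMdef]; ring
  have hq0 : q ≠ 0 := pow_ne_zero _ (by exact_mod_cast hp.ne_zero)
  have hNtot : N = Nat.totient M := by
    rw [hMdef, Nat.totient_prime_pow hp hr]
  have hN1 : 1 ≤ N := by
    have h1 : 1 ≤ p ^ (r - 1) := Nat.one_le_pow _ _ hp.pos
    have h2 : 1 ≤ p - 1 := Nat.le_sub_one_of_lt hp.one_lt
    calc 1 = 1 * 1 := by ring
    _ ≤ p ^ (r - 1) * (p - 1) := Nat.mul_le_mul h1 h2
  -- u is a unit mod M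
  have hwM : ((u : ZMod M)) * (w : ZMod M) = 1 := by
    have h : ((u * w : ℤ) : ZMod M) = ((1 : ℤ) : ZMod M) := by
      rw [ZMod.intCast_eq_intCast_iff]
      rwa [hMcast]
    push_cast at h; exact h
  have hUnit : IsUnit ((u : ZMod M)) := IsUnit.of_mul_eq_one _ hwM
  -- Euler's theorem
  have hEuler : ((u : ZMod M)) ^ N = 1 := by
    rw [hNtot]
    have h := ZMod.pow_totient hUnit.unit
    calc ((u : ZMod M)) ^ Nat.totient M
        = ((hUnit.unit ^ Nat.totient M : (ZMod M)ˣ) : ZMod M) := by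
          rw [Units.val_pow_eq_pow_val, IsUnit.unit_spec]
    _ = 1 := by rw [h]; rfl
  have hqZ : ((q : ℤ) : ZMod M) = 0 := by rw [← hMcast]; simp
  have hdvd1 : q ∣ u ^ N - 1 := by
    rw [← hMcast, ← ZMod.intCast_zmod_eq_zero_iff_dvd]
    push_cast
    rw [hEuler]; ring
  have hdvd2 : q ∣ (u + k * q) ^ N - 1 := by
    rw [← hMcast, ← ZMod.intCast_zmod_eq_zero_iff_dvd]
    push_cast
    rw [ZMod.natCast_self M]
    simp [sub_eq_zero, hEuler]
  set A : ℤ := eulerQuotientZ p r u with hA'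
  set B : ℤ := eulerQuotientZ p r (u + k * q) with hB'
  have hA : q * A = u ^ N - 1 := by
    rw [hA', eulerQuotientZ, ← hNdef, ← hqdef, Int.mul_ediv_cancel' hdvd1]
  have hB : q * B = (u + k * q) ^ N - 1 := by
    rw [hB', eulerQuotientZ, ← hNdef, ← hqdef, Int.mul_ediv_cancel' hdvd2]
  obtain ⟨m, hm⟩ : ∃ m, N = m + 1 := ⟨N - 1, (Nat.succ_pred_eq_of_pos hN1).symm⟩
  -- binomial expansion mod q²
  have hbin : q ^ 2 ∣ (u + k * q) ^ N - (u ^ N + (N : ℤ) * u ^ m * (k * q)) := by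
    have h1 := binom_aux u (k * q) m
    have h2 : q ^ 2 ∣ (k * q) ^ 2 := by rw [mul_pow]; exact Dvd.dvd.mul_left (dvd_refl _) _
    have h4 : ((m + 1 : ℕ) : ℤ) = (m : ℤ) + 1 := by push_cast; ring
    rw [hm, h4]
    exact h2.trans h1
  have hkey : q ∣ B - (A + (N : ℤ) * u ^ m * k) := by
    have h3 : q * q ∣ q * (B - (A + (N : ℤ) * u ^ m * k)) := by
      have he : q * (B - (A + (N : ℤ) * u ^ m * k))
          = (u + k * q) ^ N - (u ^ N + (N : ℤ) * u ^ m * (k * q)) := by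
        rw [mul_sub, mul_add, hA, hB]; ring
      rw [he, ← pow_two]; exact hbin
    exact (mul_dvd_mul_iff_left hq0).mp h3
  have hBA : B ≡ A + (N : ℤ) * u ^ m * k [ZMOD q] := (Int.ModEq.symm (Int.modEq_iff_dvd.mpr hkey))
  -- N ≡ -p^(r-1) mod q
  have hNcast : (N : ℤ) = (p : ℤ) ^ (r - 1) * ((p : ℤ) - 1) := by
    rw [hNdef]
    push_cast [Nat.cast_sub hp.one_le]
    ring
  have hpr : (p : ℤ) ^ (r - 1) * (p : ℤ) = q := by
    rw [hqdef, ← pow_succ, Nat.sub_add_cancel hr]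
  have hNmod : (N : ℤ) ≡ -((p : ℤ) ^ (r - 1)) [ZMOD q] := by
    rw [Int.modEq_iff_dvd]
    have : -((p : ℤ) ^ (r - 1)) - (N : ℤ) = -q := by rw [hNcast, ← hpr]; ring
    rw [this]
    exact dvd_neg.mpr dvd_rfl
  -- u^m ≡ w mod q
  have huN : u ^ N ≡ 1 [ZMOD q] := (Int.modEq_iff_dvd.mpr hdvd1).symm
  have hum : u ^ m ≡ w [ZMOD q] := by
    calc u ^ m ≡ u ^ m * (u * w) [ZMOD q] := by
          conv_lhs => rw [show u ^ m = u ^ m * 1 by ring]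
          exact (Int.ModEq.refl _).mul hw.symm
    _ = u ^ N * w := by rw [hm]; ring
    _ ≡ 1 * w [ZMOD q] := huN.mul_right w
    _ = w := one_mul w
  have hfin : (N : ℤ) * u ^ m * k ≡ -((p : ℤ) ^ (r - 1)) * w * k [ZMOD q] :=
    (hNmod.mul hum).mul_right k
  have := hBA.trans ((Int.ModEq.refl A).add hfin)
  have heq : A + -((p : ℤ) ^ (r - 1)) * w * k = A - k * (p : ℤ) ^ (r - 1) * w := by ring
  rw [heq] at this
  exact this
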